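/- For any 0 < τ ≤ 1/2, the set T_τ = {(v,w) ∈ S²×S² : ½|v+w| + ½(v+w)·e₁ = τ and 1 - ½|v+w| = 1 - τ} is nonempty, and the image of T_τ under the first projection pr₁ : S²×S² → S² equals {v ∈ S² : |v·e₁| ≤ √(1-τ²)}. -/

import Mathlib

open scoped RealInnerProductSpace

noncomputable def e1 : EuclideanSpace ℝ (Fin 3) := EuclideanSpace.single 0 1

/-- The Fukaya–Oh–Ohta–Ono torus `T_τ ⊂ S² × S²` in Oakley–Usher coordinates. -/
noncomputable def fooTorus (τ : ℝ) : Set (EuclideanSpace ℝ (Fin 3) × EuclideanSpace ℝ (Fin 3)) :=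
  {p | ‖p.1‖ = 1 ∧ ‖p.2‖ = 1 ∧
    (1 / 2) * ‖p.1 + p.2‖ + (1 / 2) * ⟪p.1 + p.2, e1⟫ = τ ∧
    1 - (1 / 2) * ‖p.1 + p.2‖ = 1 - τ}

noncomputable def myV (a b c : ℝ) : EuclideanSpace ℝ (Fin 3) :=
  (WithLp.equiv 2 (Fin 3 → ℝ)).symm ![a, b, c]

lemma myNorm (x : EuclideanSpace ℝ (Fin 3)) :
    ‖x‖ = Real.sqrt (x 0 ^ 2 + x 1 ^ 2 + x 2 ^ 2) := by
  rw [EuclideanSpace.norm_eq]; simp [Fin.sum_univ_three, sq_abs]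

lemma myInner (x y : EuclideanSpace ℝ (Fin 3)) :
    ⟪x, y⟫ = x 0 * y 0 + x 1 * y 1 + x 2 * y 2 := by
  simp [PiLp.inner_apply, Fin.sum_univ_three, RCLike.inner_apply]; ring

lemma myNorm_eq_iff (x : EuclideanSpace ℝ (Fin 3)) {r : ℝ} (hr : 0 ≤ r) :
    ‖x‖ = r ↔ x 0 ^ 2 + x 1 ^ 2 + x 2 ^ 2 = r ^ 2 := by
  rw [myNorm]
  constructor
  · intro h
    rw [← h, Real.sq_sqrt (by positivity)]
  · intro h
    rw [h, Real.sqrt_sq hr]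

lemma mem_fooTorus_iff (τ : ℝ) (p : EuclideanSpace ℝ (Fin 3) × EuclideanSpace ℝ (Fin 3)) :
    p ∈ fooTorus τ ↔
      ‖p.1‖ = 1 ∧ ‖p.2‖ = 1 ∧ ‖p.1 + p.2‖ = 2 * τ ∧ ⟪p.1 + p.2, e1⟫ = 0 := by
  constructor
  · rintro ⟨h1, h2, h3, h4⟩
    have hn : ‖p.1 + p.2‖ = 2 * τ := by linarith
    exact ⟨h1, h2, hn, by rw [hn] at h3; linarith⟩
  · rintro ⟨h1, h2, h3, h4⟩
    exact ⟨h1, h2, by rw [h3, h4]; ring, by rw [h3]; ring⟩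

lemma inner_e1 (x : EuclideanSpace ℝ (Fin 3)) : ⟪x, e1⟫ = x 0 := by
  simp [myInner, e1, EuclideanSpace.single_apply]

/-- for `0 < τ ≤ 1/2`, the torus `T_τ` is nonempty and its image under the
first projection is `{v ∈ S² : |v·e₁| ≤ √(1-τ²)}`. -/
theorem fooTorus_nonempty_and_projection (τ : ℝ) (hτ0 : 0 < τ) (hτ : τ ≤ 1 / 2) :
    (fooTorus τ).Nonempty ∧
      Prod.fst '' fooTorus τ =
        {v : EuclideanSpace ℝ (Fin 3) | ‖v‖ = 1 ∧ |⟪v, e1⟫| ≤ Real.sqrt (1 - τ ^ 2)} := by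
  have hτ2 : τ ^ 2 ≤ 1 := by nlinarith
  have construct : ∀ v : EuclideanSpace ℝ (Fin 3), ‖v‖ = 1 → v 0 ^ 2 ≤ 1 - τ ^ 2 →
      ∃ w, (v, w) ∈ fooTorus τ := by
    intro v hv hv0
    have hsum : v 0 ^ 2 + v 1 ^ 2 + v 2 ^ 2 = 1 := by
      have := (myNorm_eq_iff v (by norm_num)).mp hv; simpa using this
    set s : ℝ := v 1 ^ 2 + v 2 ^ 2 with hs
    have hsτ : τ ^ 2 ≤ s := by nlinarith
    have hspos : 0 < s := lt_of_lt_of_le (by positivity) hsτ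
    set b : ℝ := 2 * τ * Real.sqrt (s - τ ^ 2) / s with hb
    set a : ℝ := 2 * τ ^ 2 / s - 1 with ha
    have hsq : Real.sqrt (s - τ ^ 2) ^ 2 = s - τ ^ 2 := Real.sq_sqrt (by linarith)
    refine ⟨myV (-v 0) (a * v 1 - b * v 2) (a * v 2 + b * v 1), ?_⟩
    rw [mem_fooTorus_iff]
    refine ⟨hv, ?_, ?_, ?_⟩
    · rw [myNorm_eq_iff _ (by norm_num)]
      simp only [myV, WithLp.equiv_symm_apply, PiLp.toLp_apply, Matrix.cons_val_zero, Matrix.cons_val_one,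
        Matrix.head_cons, Matrix.cons_val_two, Matrix.tail_cons]
      have : (a * v 1 - b * v 2) ^ 2 + (a * v 2 + b * v 1) ^ 2 = (a ^ 2 + b ^ 2) * s := by ring
      have hab : a ^ 2 + b ^ 2 = 1 := by
        rw [ha, hb]; field_simp; linear_combination (4 * τ ^ 2) * hsq
      nlinarith [hab, this]
    · rw [myNorm_eq_iff _ (by positivity)]
      simp only [PiLp.add_apply, myV, WithLp.equiv_symm_apply, PiLp.toLp_apply, Matrix.cons_val_zero,
        Matrix.cons_val_one, Matrix.head_cons, Matrix.cons_val_two, Matrix.tail_cons]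
      have h1 : v 0 + -v 0 = 0 := by ring
      rw [h1]
      have : (v 1 + (a * v 1 - b * v 2)) ^ 2 + (v 2 + (a * v 2 + b * v 1)) ^ 2
          = ((a + 1) ^ 2 + b ^ 2) * s := by ring
      have hab : ((a + 1) ^ 2 + b ^ 2) * s = 4 * τ ^ 2 := by
        rw [ha, hb]; field_simp; linear_combination (4 * τ ^ 2) * hsq
      linear_combination this + hab
    · rw [inner_e1]
      simp [myV]
  constructor
  · -- nonemptiness: use v = (0,1,0)
    have hv : ‖myV 0 1 0‖ = 1 := by
      rw [myNorm_eq_iff _ (by norm_num)]; simp [myV]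
    have h0 : (myV 0 1 0) 0 ^ 2 ≤ 1 - τ ^ 2 := by
      have h00 : (myV 0 1 0) 0 = 0 := by simp [myV]
      rw [h00]; nlinarith
    obtain ⟨w, hw⟩ := construct _ hv h0
    exact ⟨_, hw⟩
  · ext v
    simp only [Set.mem_image, Set.mem_setOf_eq]
    constructor
    · rintro ⟨⟨v', w⟩, hmem, rfl⟩
      rw [mem_fooTorus_iff] at hmem
      obtain ⟨h1, h2, h3, h4⟩ := hmem
      simp only at h1 h2 h3 h4 ⊢
      have hv : v' 0 ^ 2 + v' 1 ^ 2 + v' 2 ^ 2 = 1 := by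
        have := (myNorm_eq_iff v' (by norm_num)).mp h1; simpa using this
      have hw : w 0 ^ 2 + w 1 ^ 2 + w 2 ^ 2 = 1 := by
        have := (myNorm_eq_iff w (by norm_num)).mp h2; simpa using this
      have hvw : (v' 0 + w 0) ^ 2 + (v' 1 + w 1) ^ 2 + (v' 2 + w 2) ^ 2 = (2 * τ) ^ 2 := by
        have := (myNorm_eq_iff (v' + w) (by positivity)).mp h3
        simpa [PiLp.add_apply] using this
      have h0 : w 0 = -v' 0 := by
        rw [inner_e1] at h4; simp at h4; linarith
      rw [h0] at hw hvw
      have hsq : v' 0 ^ 2 ≤ 1 - τ ^ 2 := by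
        nlinarith [sq_nonneg (v' 1 * w 2 - v' 2 * w 1), sq_nonneg (v' 1 * w 1 + v' 2 * w 2 - (1 - v' 0 ^ 2))]
      refine ⟨h1, ?_⟩
      rw [inner_e1]
      rw [← Real.sqrt_sq_eq_abs]
      exact Real.sqrt_le_sqrt hsq
    · rintro ⟨hv, habs⟩
      have hsq : v 0 ^ 2 ≤ 1 - τ ^ 2 := by
        rw [inner_e1] at habs
        calc v 0 ^ 2 = |v 0| ^ 2 := (sq_abs _).symm
          _ ≤ Real.sqrt (1 - τ ^ 2) ^ 2 := pow_le_pow_left₀ (abs_nonneg _) habs 2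
          _ = 1 - τ ^ 2 := Real.sq_sqrt (by linarith)
      obtain ⟨w, hw⟩ := construct v hv hsq
      exact ⟨(v, w), hw, rfl⟩
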